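/- Let G be a simple graph on a finite type V, let s : V, and define d₀ : V → ℕ∞ by d₀ s = 0 and d₀ v = ⊤ for v ≠ s. Define the synchronous Bellman–Ford update F : (V → ℕ∞) → (V → ℕ∞) by F d v = min (d v) ((⨅ u ∈ G.neighborSet v, d u) + 1). Then for every v : V, F^[Fintype.card V - 1] d₀ v = G.edist s v. -/

import Mathlib

theorem bellman_ford_converges_in_card_sub_one {V : Type*} [Fintype V] [DecidableEq V]
    (G : SimpleGraph V) (s : V)
    (d₀ : V → ℕ∞) (hd₀s : d₀ s = 0) (hd₀ : ∀ v, v ≠ s → d₀ v = ⊤)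
    (F : (V → ℕ∞) → (V → ℕ∞))
    (hF : ∀ d v, F d v = min (d v) ((⨅ u ∈ G.neighborSet v, d u) + 1)) :
    ∀ v : V, F^[Fintype.card V - 1] d₀ v = G.edist s v := by
  -- F d ≤ d pointwise
  have hFle : ∀ d v, F d v ≤ d v := fun d v => by rw [hF]; exact min_le_left _ _
  -- lower bound invariant
  have hlow : ∀ k v, G.edist s v ≤ F^[k] d₀ v := by
    intro k
    induction k with
    | zero =>
      intro v
      by_cases h : v = s
      · subst h; simp [hd₀s]
      · simp [hd₀ v h]
    | succ k ih =>
      intro v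
      rw [Function.iterate_succ_apply', hF, le_min_iff]
      refine ⟨ih v, ?_⟩
      rcases Set.eq_empty_or_nonempty (G.neighborSet v) with h | h
      · simp [h]
      · have hinf : (⨅ u ∈ G.neighborSet v, F^[k] d₀ u) ∈ (F^[k] d₀) '' G.neighborSet v := by
          rw [← sInf_image]
          exact csInf_mem (h.image _)
        obtain ⟨u, hu, heq⟩ := hinf
        rw [← heq]
        calc G.edist s v ≤ G.edist s u + G.edist u v := SimpleGraph.edist_triangle
          _ ≤ F^[k] d₀ u + 1 := by
              gcongr
              · exact ih u
              · exact le_of_eq (SimpleGraph.edist_eq_one_iff_adj.mpr hu.symm)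
  -- upper bound: if edist ≤ k then F^[k] d₀ v ≤ edist
  have hup : ∀ (k : ℕ) (v : V), G.edist s v ≤ (k : ℕ∞) → F^[k] d₀ v ≤ G.edist s v := by
    intro k
    induction k with
    | zero =>
      intro v hv
      have : G.edist s v = 0 := le_antisymm (by exact_mod_cast hv) zero_le
      have hvs : s = v := SimpleGraph.edist_eq_zero_iff.mp this
      subst hvs
      simp [this, hd₀s]
    | succ k ih =>
      intro v hv
      rcases eq_or_ne (G.edist s v) 0 with h0 | h0
      · have hvs : s = v := SimpleGraph.edist_eq_zero_iff.mp h0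
        subst hvs
        rw [Function.iterate_succ_apply']
        exact (hFle _ _).trans (ih s (h0 ▸ zero_le))
      · -- edist is some m+1 ≤ k+1
        have hne : G.edist s v ≠ ⊤ := by
          intro h; rw [h] at hv
          exact absurd (top_le_iff.mp hv) (by exact_mod_cast ENat.coe_ne_top (k+1))
        obtain ⟨m, hm⟩ : ∃ m : ℕ, G.edist s v = m := by
          lift G.edist s v to ℕ using hne with m
          exact ⟨m, rfl⟩
        obtain ⟨p, hp⟩ := SimpleGraph.exists_walk_of_edist_eq_coe hm
        -- p : Walk s v of length m, m ≥ 1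
        cases hq : p.reverse with
        | nil =>
          exfalso
          have hp0 : p.length = 0 := by
            simpa using congrArg SimpleGraph.Walk.length hq
          apply h0
          rw [hm]
          exact_mod_cast by omega
        | cons hadj q =>
          rename_i w
          -- hadj : G.Adj v w, q : Walk w s
          have hlen : q.length + 1 = m := by
            have h' := congrArg SimpleGraph.Walk.length hq
            simp [SimpleGraph.Walk.length_reverse] at h'
            omega
          have hdu : G.edist s w ≤ (q.length : ℕ∞) := by
            rw [SimpleGraph.edist_comm]
            simpa using q.edist_le
          have hqk : (q.length : ℕ∞) ≤ (k : ℕ∞) := by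
            have hmk : (m : ℕ∞) ≤ (k + 1 : ℕ∞) := hm ▸ hv
            have : m ≤ k + 1 := by exact_mod_cast hmk
            exact_mod_cast by omega
          rw [Function.iterate_succ_apply', hF]
          refine le_trans (min_le_right _ _) ?_
          have h1 : (⨅ u ∈ G.neighborSet v, F^[k] d₀ u) ≤ F^[k] d₀ w :=
            biInf_le _ (by exact hadj)
          calc (⨅ u ∈ G.neighborSet v, F^[k] d₀ u) + 1 ≤ F^[k] d₀ w + 1 := by gcongr
            _ ≤ (q.length : ℕ∞) + 1 := by
                gcongr
                exact (ih w (hdu.trans hqk)).trans hdu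
            _ = (m : ℕ∞) := by exact_mod_cast hlen
            _ = G.edist s v := hm.symm
  intro v
  rcases eq_or_ne (G.edist s v) ⊤ with htop | hne
  · exact le_antisymm (htop ▸ le_top) (htop ▸ hlow (Fintype.card V - 1) v)
  · refine le_antisymm ?_ (hlow _ v)
    apply hup
    obtain ⟨p, hp⟩ := SimpleGraph.exists_walk_of_edist_ne_top hne
    rw [← hp]
    have := p.toPath.2.length_lt
    have hle : (p.toPath : G.Walk s v).length ≤ Fintype.card V - 1 := by omega
    calc (p.length : ℕ∞) = G.edist s v := hp
      _ ≤ ((p.toPath : G.Walk s v).length : ℕ∞) := SimpleGraph.edist_le _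
      _ ≤ _ := by exact_mod_cast hle
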